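/- Let p ≥ 1, let S₀ be a real symmetric 2p×2p matrix with ordered spectrum σ = (σ₁, …, σ_{2p}), and let J be a hermitian structure on ℝ^{2p} (JᵀJ = I, J² = −I). Then there exist real numbers ν₁ ≥ … ≥ ν_p such that the ordered spectrum of S₀ + J⁻¹S₀J is the doubled list (ν₁, ν₁, …, ν_p, ν_p), and this doubled list is the ordered spectrum of a sum A + B of two real symmetric 2p×2p matrices A and B each having ordered spectrum σ. (This is the inclusion Im ℱ ⊂ 𝒫₂.) -/

import Mathlib

open Matrix Polynomial

private lemma even_finrank_of_sq_eq_neg_one {V : Type*} [AddCommGroup V] [Module ℝ V]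
    [FiniteDimensional ℝ V] (j : V →ₗ[ℝ] V) (hj : j ∘ₗ j = -LinearMap.id) :
    Even (Module.finrank ℝ V) := by
  have hdet : LinearMap.det j * LinearMap.det j = (-1 : ℝ) ^ Module.finrank ℝ V := by
    rw [← LinearMap.det_comp, hj]
    have h : (-LinearMap.id : V →ₗ[ℝ] V) = (-1 : ℝ) • LinearMap.id := by
      ext v; simp
    rw [h, LinearMap.det_smul, LinearMap.det_id, mul_one]
  rcases Nat.even_or_odd (Module.finrank ℝ V) with h | h
  · exact h
  · exfalso
    rw [h.neg_one_pow] at hdet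
    nlinarith [hdet, mul_self_nonneg (LinearMap.det j)]

private lemma charpoly_conj_eq {n : Type*} [DecidableEq n] [Fintype n]
    (U V A : Matrix n n ℝ) (hUV : U * V = 1) :
    (U * A * V).charpoly = A.charpoly := by
  have h1 : (U.map C) * (V.map C) = 1 := by
    rw [← Matrix.map_mul, hUV, Matrix.map_one _ (map_zero C) (map_one C)]
  have hc : charmatrix (U * A * V) = (U.map C) * charmatrix A * (V.map C) := by
    rw [charmatrix, charmatrix, Matrix.mul_sub, Matrix.sub_mul]
    congr 1
    · have hcomm := (Matrix.scalar_commute (X : ℝ[X]) (fun r' => Commute.all _ _) (U.map C)).eq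
      rw [← hcomm, mul_assoc, h1, mul_one]
    · rw [RingHom.mapMatrix_apply, RingHom.mapMatrix_apply, Matrix.map_mul, Matrix.map_mul]
  rw [Matrix.charpoly, Matrix.charpoly, hc, det_mul, det_mul]
  have h2 : (U.map C).det * (V.map C).det = 1 := by rw [← det_mul, h1, det_one]
  calc (U.map C).det * (charmatrix A).det * (V.map C).det
      = (charmatrix A).det * ((U.map C).det * (V.map C).det) := by ring
    _ = (charmatrix A).det := by rw [h2, mul_one]

private lemma charpoly_diagonal' {n : Type*} [DecidableEq n] [Fintype n] (d : n → ℝ) :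
    (Matrix.diagonal d).charpoly = ∏ i, (X - C (d i)) := by
  rw [Matrix.charpoly, charmatrix, RingHom.mapMatrix_apply, Matrix.diagonal_map (map_zero C),
    Matrix.scalar_apply, Matrix.diagonal_sub, det_diagonal]

private lemma multiset_half {α : Type*} [DecidableEq α] (m : Multiset α)
    (h : ∀ a, Even (m.count a)) : ∃ m', m = m' + m' := by
  refine ⟨∑ a ∈ m.toFinset, (m.count a / 2) • ({a} : Multiset α), ?_⟩
  conv_lhs => rw [← Multiset.toFinset_sum_count_nsmul_eq m]
  rw [← Finset.sum_add_distrib]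
  refine Finset.sum_congr rfl fun a _ => ?_
  rw [← add_nsmul]
  congr 1
  obtain ⟨k, hk⟩ := h a
  omega

private lemma smul_one_diag {n : Type*} [DecidableEq n] [Fintype n] (lam : ℝ) :
    lam • (1 : Matrix n n ℝ) = Matrix.diagonal (fun _ => lam) := by
  ext i j
  by_cases h : i = j <;>
    simp [Matrix.smul_apply, Matrix.one_apply, Matrix.diagonal_apply, h]

private lemma filter_card_even {N : ℕ} {S J : Matrix (Fin N) (Fin N) ℝ}
    (hS : S.IsHermitian) (hcomm : S * J = J * S) (hJsq : J * J = -1) (lam : ℝ) :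
    Even ((Finset.univ.filter fun i => lam = hS.eigenvalues i).card) := by
  classical
  set M : Matrix (Fin N) (Fin N) ℝ := S - lam • 1 with hM
  have hMJ : M * J = J * M := by
    rw [hM, Matrix.sub_mul, Matrix.mul_sub, hcomm, Matrix.smul_mul, Matrix.mul_smul,
      one_mul, mul_one]
  have hJK : ∀ v ∈ LinearMap.ker M.mulVecLin, J.mulVecLin v ∈ LinearMap.ker M.mulVecLin := by
    intro v hv
    rw [LinearMap.mem_ker] at hv ⊢
    simp only [mulVecLin_apply] at hv ⊢
    rw [mulVec_mulVec, hMJ, ← mulVec_mulVec, hv, mulVec_zero]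
  set jK := (J.mulVecLin).restrict hJK with hjK
  have hjj : jK ∘ₗ jK = -LinearMap.id := by
    apply LinearMap.ext
    rintro ⟨v, hv⟩
    apply Subtype.ext
    have h2 : (J * J) *ᵥ v = -v := by
      rw [hJsq, Matrix.neg_mulVec, Matrix.one_mulVec]
    simp only [LinearMap.comp_apply, hjK, LinearMap.restrict_apply, LinearMap.neg_apply,
      LinearMap.id_apply, mulVecLin_apply]
    simpa [mulVec_mulVec] using h2
  have hkeven : Even (Module.finrank ℝ (LinearMap.ker M.mulVecLin)) :=
    even_finrank_of_sq_eq_neg_one jK hjj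
  -- rank computation via spectral theorem
  set U : Matrix (Fin N) (Fin N) ℝ := (hS.eigenvectorUnitary : Matrix (Fin N) (Fin N) ℝ) with hU
  have hU1 : U * star U = 1 := Matrix.mem_unitaryGroup_iff.mp hS.eigenvectorUnitary.2
  have hdU : IsUnit U.det := by
    apply IsUnit.of_mul_eq_one (star U).det
    rw [← det_mul, hU1, det_one]
  have hdUs : IsUnit (star U).det := by
    apply IsUnit.of_mul_eq_one U.det
    rw [← det_mul, mul_eq_one_comm.mpr hU1, det_one]
  have hMM : M = U * Matrix.diagonal (fun i => hS.eigenvalues i - lam) * star U := by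
    have hdiag : Matrix.diagonal (fun i => hS.eigenvalues i - lam)
        = Matrix.diagonal hS.eigenvalues - lam • 1 := by
      rw [smul_one_diag, Matrix.diagonal_sub]
    rw [hdiag, Matrix.mul_sub, Matrix.sub_mul, hM]
    congr 1
    · conv_lhs => rw [hS.spectral_theorem]
      rw [Unitary.conjStarAlgAut_apply, RCLike.ofReal_real_eq_id, Function.id_comp, ← hU]
    · rw [Matrix.mul_smul, mul_one, Matrix.smul_mul, hU1]
  have hrank : M.rank = (Finset.univ.filter fun i => ¬ (lam = hS.eigenvalues i)).card := by
    rw [hMM, Matrix.rank_mul_eq_left_of_isUnit_det (star U) _ hdUs,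
      Matrix.rank_mul_eq_right_of_isUnit_det U _ hdU, Matrix.rank_diagonal,
      Fintype.card_subtype]
    congr 1
    ext i
    simp [sub_eq_zero, eq_comm]
    rw [not_iff_not]
    constructor
    · intro h; linarith
    · intro h; linarith
  have hnc : M.rank + Module.finrank ℝ (LinearMap.ker M.mulVecLin) = N := by
    have h := LinearMap.finrank_range_add_finrank_ker M.mulVecLin
    rw [Module.finrank_fin_fun] at h
    exact h
  have hcards := Finset.card_filter_add_card_filter_not
    (s := (Finset.univ : Finset (Fin N))) (fun i => lam = hS.eigenvalues i)
  have hNcard : (Finset.univ : Finset (Fin N)).card = N := by simp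
  have hkey : (Finset.univ.filter fun i => lam = hS.eigenvalues i).card
      = Module.finrank ℝ (LinearMap.ker M.mulVecLin) := by omega
  rw [hkey]
  exact hkeven

/-- the inclusion `Im ℱ ⊆ 𝒫₂`. Let `S₀` be a real symmetric
`2p × 2p` matrix with ordered spectrum `σ = (σ₁ ≥ ⋯ ≥ σ_{2p})` and let `J` be a
hermitian structure on `ℝ^{2p}`.  Then the ordered spectrum of `S₀ + J⁻¹ S₀ J` is a
doubled list `(ν₁, ν₁, …, ν_p, ν_p)` with `ν₁ ≥ ⋯ ≥ ν_p`, and this doubled list is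
the ordered spectrum of a sum `A + B` of two real symmetric `2p × 2p` matrices each
having ordered spectrum `σ`. -/
theorem image_frequency_map_subset_P2
    (p : ℕ) (hp : 1 ≤ p)
    (σ : Fin (2 * p) → ℝ) (hσ : Antitone σ)
    (S₀ : Matrix (Fin (2 * p)) (Fin (2 * p)) ℝ) (hS₀ : S₀.IsSymm)
    (hS₀spec : S₀.charpoly = ∏ i : Fin (2 * p), (Polynomial.X - Polynomial.C (σ i)))
    (J : Matrix (Fin (2 * p)) (Fin (2 * p)) ℝ)
    (hJorth : Jᵀ * J = 1) (hJsq : J * J = -1) :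
    ∃ ν : Fin p → ℝ, Antitone ν ∧
      (S₀ + J⁻¹ * S₀ * J).charpoly =
        ∏ i : Fin p, (Polynomial.X - Polynomial.C (ν i)) ^ 2 ∧
      ∃ A B : Matrix (Fin (2 * p)) (Fin (2 * p)) ℝ,
        A.IsSymm ∧ B.IsSymm ∧
        A.charpoly = ∏ i : Fin (2 * p), (Polynomial.X - Polynomial.C (σ i)) ∧
        B.charpoly = ∏ i : Fin (2 * p), (Polynomial.X - Polynomial.C (σ i)) ∧
        (A + B).charpoly = ∏ i : Fin p, (Polynomial.X - Polynomial.C (ν i)) ^ 2 := by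
  classical
  have hJinv : J⁻¹ = Jᵀ := inv_eq_left_inv hJorth
  have hJJT : J * Jᵀ = 1 := mul_eq_one_comm.mp hJorth
  have hJT : Jᵀ = -J := by
    rw [← hJinv, inv_eq_right_inv (B := -J) (by rw [Matrix.mul_neg, hJsq, neg_neg])]
  set S : Matrix (Fin (2 * p)) (Fin (2 * p)) ℝ := S₀ + J⁻¹ * S₀ * J with hSdef
  have hSJ : S = S₀ + Jᵀ * S₀ * J := by rw [hSdef, hJinv]
  have hBsymm : (Jᵀ * S₀ * J).IsSymm := by
    show (Jᵀ * S₀ * J)ᵀ = Jᵀ * S₀ * J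
    rw [Matrix.transpose_mul, Matrix.transpose_mul, Matrix.transpose_transpose, hS₀.eq,
      mul_assoc]
  have hSsymm : S.IsSymm := by
    show Sᵀ = S
    rw [hSJ, Matrix.transpose_add, hS₀.eq, hBsymm.eq]
  have hSherm : S.IsHermitian := by
    rw [Matrix.IsHermitian, Matrix.conjTranspose_eq_transpose_of_trivial]
    exact hSsymm
  have hcomm : S * J = J * S := by
    have h1 : Jᵀ * S₀ * J * J = J * S₀ := by
      rw [mul_assoc (Jᵀ * S₀) J J, hJsq, mul_neg_one, hJT, Matrix.neg_mul, neg_neg]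
    have h2 : J * (Jᵀ * S₀ * J) = S₀ * J := by
      rw [← mul_assoc, ← mul_assoc, hJJT, one_mul]
    rw [hSJ, Matrix.add_mul, h1, Matrix.mul_add, h2]
    exact add_comm _ _
  set μ : Fin (2 * p) → ℝ := hSherm.eigenvalues with hμ
  have hchar : S.charpoly = ∏ i, (X - C (μ i)) := by
    conv_lhs => rw [hSherm.spectral_theorem]
    rw [Unitary.conjStarAlgAut_apply]
    rw [charpoly_conj_eq _ _ _ (Matrix.mem_unitaryGroup_iff.mp hSherm.eigenvectorUnitary.2)]
    exact charpoly_diagonal' μ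
  set msp : Multiset ℝ := Finset.univ.val.map μ with hmsp
  have hcount : ∀ a, Even (msp.count a) := by
    intro a
    rw [hmsp, Multiset.count_map]
    have : Multiset.card (Multiset.filter (fun i => a = μ i) Finset.univ.val)
        = (Finset.univ.filter fun i => a = μ i).card := rfl
    rw [this]
    exact filter_card_even hSherm hcomm hJsq a
  obtain ⟨m', hm'⟩ := multiset_half msp hcount
  have hcardm : Multiset.card m' = p := by
    have h2 : Multiset.card msp = 2 * p := by simp [hmsp]
    rw [hm', Multiset.card_add] at h2
    omega
  set l : List ℝ := m'.sort (· ≤ ·) with hl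
  have hlen : l.length = p := by rw [hl, Multiset.length_sort]; exact hcardm
  set ν : Fin p → ℝ := fun i => l.get (Fin.cast hlen.symm i.rev) with hν
  have hanti : Antitone ν := by
    intro i j hij
    apply (Multiset.pairwise_sort m' (· ≤ ·)).sortedLE.monotone_get
    show (Fin.cast hlen.symm j.rev : Fin l.length) ≤ Fin.cast hlen.symm i.rev
    simpa [Fin.le_def] using Fin.rev_le_rev.mpr hij
  have hprod : ∏ i : Fin p, (X - C (ν i)) = (m'.map (fun a => X - C a)).prod := by
    have hcoe : (l : Multiset ℝ) = m' := Multiset.sort_eq m' (· ≤ ·)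
    rw [← hcoe]
    have h1 : (Multiset.map (fun a => X - C a) (l : Multiset ℝ)).prod
        = (l.map (fun a => X - C a)).prod := by
      rw [Multiset.map_coe, Multiset.prod_coe]
    rw [h1]
    have h2 : l.map (fun a => X - C a) = List.ofFn (fun k => X - C (l.get k)) := by
      conv_lhs => rw [← List.ofFn_get l, List.map_ofFn]
      rfl
    rw [h2, List.prod_ofFn]
    exact Equiv.prod_comp ((Fin.revPerm.trans (finCongr hlen.symm)))
      (fun k => X - C (l.get k))
  have hsq : S.charpoly = ∏ i : Fin p, (X - C (ν i)) ^ 2 := by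
    have hfc : (fun i => X - C (μ i)) = (fun a => X - C a) ∘ μ := rfl
    rw [hchar, Finset.prod_eq_multiset_prod, hfc, ← Multiset.map_map (fun a => X - C a) μ,
      ← hmsp, hm', Multiset.map_add, Multiset.prod_add, ← hprod, Finset.prod_pow, pow_two]
  exact ⟨ν, hanti, hsq, S₀, Jᵀ * S₀ * J, hS₀, hBsymm, hS₀spec,
    by rw [charpoly_conj_eq Jᵀ J S₀ hJorth]; exact hS₀spec,
    by rw [← hSJ]; exact hsq⟩
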